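/- Let n ≥ 2, let m ∈ {0,1,…,n−1} be fixed, let d = gcd(n, m) (with gcd(n,0) = n), and let F(x) = circ(f_0(x),…,f_{n−1}(x)) be a circulant matrix function satisfying F(x + ω^m y) = Ω^{−m} F(y) Ω^{m} F(x) for all x, y ∈ ℂ. Then there exist exponential functions g_0, g_1, …, g_{d−1}: ℂ → ℂ such that, defining g_{(r+km) mod n}(x) = g_r(ω^{km} x) for r ∈ {0,…,d−1} and k ∈ {0,…,n/d−1}, one has f_j(x) = (1/n) Σ_{l=0}^{n−1} ω^{−jl} g_l(x) for every j ∈ {0,…,n−1} and every x ∈ ℂ. -/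
import Mathlib


/-- Let `n ≥ 2`, let `m ∈ {0,…,n−1}` be fixed, let
`d = gcd(n,m)` (with `gcd(n,0) = n`), and let `F(x) = circ(f₀(x),…,f_{n−1}(x))`
be a circulant matrix function satisfying
`F(x + ω^m y) = Ω^(−m) F(y) Ω^m F(x)` for all `x, y ∈ ℂ`. Then there exist
exponential functions `g₀, …, g_{d−1} : ℂ → ℂ` such that, defining
`g_{(r+km) mod n}(x) = g_r(ω^(km) x)` for `r ∈ {0,…,d−1}` and
`k ∈ {0,…,n/d−1}`, one has `f_j(x) = (1/n) Σ_{l=0}^{n−1} ω^(−jl) g_l(x)`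
for every `j` and every `x`. -/
theorem general_solution_of_circulant_equation
    (n : ℕ) (hn : 2 ≤ n)
    (ω : ℂ) (hω : ω = Complex.exp (2 * Real.pi * Complex.I / n))
    (m : ℕ) (hm : m < n)
    (d : ℕ) (hd : d = Nat.gcd n m)
    (Om : Matrix (Fin n) (Fin n) ℂ)
    (hOm : Om = Matrix.diagonal fun j : Fin n => ω ^ (j : ℕ))
    (f : Fin n → ℂ → ℂ)
    (F : ℂ → Matrix (Fin n) (Fin n) ℂ)
    (hF : ∀ (x : ℂ) (j k : Fin n), F x j k = f (k - j) x)
    (heq : ∀ x y : ℂ, F (x + ω ^ m * y) = Om⁻¹ ^ m * F y * Om ^ m * F x) :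
    ∃ h : Fin d → ℂ → ℂ,
      (∀ r : Fin d, ∀ x y : ℂ, h r (x + y) = h r x * h r y) ∧
      ∃ g : Fin n → ℂ → ℂ,
        (∀ (r : Fin d) (k : ℕ), k < n / d → ∀ x : ℂ,
          g ⟨((r : ℕ) + k * m) % n, Nat.mod_lt _ (by omega)⟩ x
            = h r (ω ^ (k * m) * x)) ∧
        (∀ (j : Fin n) (x : ℂ),
          f j x = (1 / n : ℂ) * ∑ l : Fin n,
            ω ^ (-((j : ℕ) * (l : ℕ) : ℤ)) * g l x) := by
  haveI : NeZero n := ⟨by omega⟩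
  have hn0 : (n:ℂ) ≠ 0 := Nat.cast_ne_zero.mpr (by omega)
  have hprim : IsPrimitiveRoot ω n := hω ▸ Complex.isPrimitiveRoot_exp n (by omega)
  have hωn : ω ^ n = 1 := hprim.pow_eq_one
  have hωne : ω ≠ 0 := by rw [hω]; exact Complex.exp_ne_zero _
  have hpow : ∀ a : ℕ, ω ^ a = ω ^ (a % n) := by
    intro a
    conv_lhs => rw [← Nat.div_add_mod a n]
    rw [pow_add, pow_mul, hωn, one_pow, one_mul]
  have hpowc : ∀ a b : ℕ, a % n = b % n → ω ^ a = ω ^ b := by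
    intro a b hab; rw [hpow a, hpow b, hab]
  set G : ℕ → ℂ → ℂ := fun l x => ∑ j : Fin n, ω ^ ((j:ℕ) * l) * f j x with hG
  have hGper : ∀ a : ℕ, G a = G (a % n) := by
    intro a; funext x
    refine Finset.sum_congr rfl fun j _ => ?_
    rw [hpowc ((j:ℕ)*a) ((j:ℕ)*(a % n)) (Nat.ModEq.mul_left _ (Nat.mod_modEq a n).symm)]
  -- matrix entry computation
  have hOminv : Om⁻¹ = Matrix.diagonal fun j : Fin n => (ω ^ (j:ℕ))⁻¹ := by
    apply Matrix.inv_eq_right_inv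
    rw [hOm, Matrix.diagonal_mul_diagonal, ← Matrix.diagonal_one]
    have : (fun i : Fin n => ω ^ (i:ℕ) * (ω ^ (i:ℕ))⁻¹) = fun _ : Fin n => (1:ℂ) :=
      funext fun i => mul_inv_cancel₀ (pow_ne_zero _ hωne)
    rw [this]
  have e1 : Om⁻¹ ^ m = Matrix.diagonal fun j : Fin n => ((ω ^ (j:ℕ))⁻¹) ^ m := by
    rw [hOminv, Matrix.diagonal_pow]; rfl
  have e2 : Om ^ m = Matrix.diagonal fun j : Fin n => (ω ^ (j:ℕ)) ^ m := by
    rw [hOm, Matrix.diagonal_pow]; rfl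
  have hfeq : ∀ (x y : ℂ) (k : Fin n),
      f k (x + ω ^ m * y) = ∑ p : Fin n, ω ^ ((p:ℕ) * m) * f p y * f (k - p) x := by
    intro x y k
    have h0 := congrFun (congrFun (heq x y) 0) k
    rw [hF, sub_zero] at h0
    rw [h0, e1, e2, Matrix.mul_apply]
    refine Finset.sum_congr rfl fun p _ => ?_
    rw [Matrix.mul_diagonal, Matrix.diagonal_mul, hF, hF, sub_zero]
    simp only [Fin.val_zero, pow_zero, inv_one, one_pow, one_mul, pow_mul]
    ring
  -- key scalar relation
  have keyR : ∀ (l : ℕ) (x y : ℂ), G l (x + ω ^ m * y) = G (l + m) y * G l x := by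
    intro l x y
    have step1 : G l (x + ω ^ m * y)
        = ∑ k : Fin n, ∑ p : Fin n, ω ^ ((k:ℕ)*l) * (ω ^ ((p:ℕ)*m) * f p y * f (k - p) x) := by
      refine Finset.sum_congr rfl fun k _ => ?_
      rw [hfeq, Finset.mul_sum]
    rw [step1, Finset.sum_comm]
    have step2 : ∀ p : Fin n,
        (∑ k : Fin n, ω ^ ((k:ℕ)*l) * (ω ^ ((p:ℕ)*m) * f p y * f (k - p) x))
        = ∑ q : Fin n, (ω ^ ((p:ℕ)*(l+m)) * f p y) * (ω ^ ((q:ℕ)*l) * f q x) := by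
      intro p
      refine Fintype.sum_equiv (Equiv.subRight p) _ _ fun k => ?_
      show ω ^ ((k:ℕ)*l) * (ω ^ ((p:ℕ)*m) * f p y * f (k - p) x)
          = (ω ^ ((p:ℕ)*(l+m)) * f p y) * (ω ^ (((k - p : Fin n):ℕ)*l) * f (k - p) x)
      have hk := k.isLt
      have hv : ((((k - p : Fin n) : ℕ) + (p:ℕ)) % n) = (k:ℕ) % n := by
        have h1 : ((k - p) + p : Fin n) = k := sub_add_cancel k p
        have h2 := congrArg Fin.val h1
        rw [Fin.val_add] at h2
        rw [h2]
        exact (Nat.mod_eq_of_lt hk).symm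
      have h3 : Nat.ModEq n (((k - p : Fin n):ℕ) + (p:ℕ)) (k:ℕ) := hv
      have h4 := (h3.mul_right l).add_right ((p:ℕ)*m)
      have he : ω ^ ((k:ℕ)*l + (p:ℕ)*m) = ω ^ ((p:ℕ)*(l+m) + ((k - p : Fin n):ℕ)*l) := by
        apply hpowc
        have e : (p:ℕ)*(l+m) + ((k - p : Fin n):ℕ)*l
            = (((k - p : Fin n):ℕ) + (p:ℕ))*l + (p:ℕ)*m := by ring
        rw [e]; exact h4.symm
      calc ω ^ ((k:ℕ)*l) * (ω ^ ((p:ℕ)*m) * f p y * f (k - p) x)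
          = ω ^ ((k:ℕ)*l + (p:ℕ)*m) * (f p y * f (k - p) x) := by rw [pow_add]; ring
        _ = ω ^ ((p:ℕ)*(l+m) + ((k - p : Fin n):ℕ)*l) * (f p y * f (k - p) x) := by rw [he]
        _ = _ := by rw [pow_add]; ring
    rw [Finset.sum_congr rfl fun p _ => step2 p, ← Finset.sum_mul_sum]
  -- DFT inversion
  have hinv : ∀ (j : Fin n) (x : ℂ),
      f j x = (1 / n : ℂ) * ∑ l : Fin n, ω ^ (-((j:ℕ) * (l:ℕ) : ℤ)) * G (l:ℕ) x := by
    intro j x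
    have hterm : ∀ l : Fin n, ω ^ (-((j:ℕ)*(l:ℕ) : ℤ)) * G (l:ℕ) x
        = ∑ j' : Fin n, (ω ^ ((j':ℕ)) * (ω ^ ((j:ℕ)))⁻¹) ^ ((l:ℕ)) * f j' x := by
      intro l
      rw [show G (l:ℕ) x = ∑ j' : Fin n, ω ^ ((j':ℕ) * (l:ℕ)) * f j' x from rfl, Finset.mul_sum]
      refine Finset.sum_congr rfl fun j' _ => ?_
      have hz : ω ^ (-((j:ℕ)*(l:ℕ) : ℤ)) = ((ω ^ ((j:ℕ)))⁻¹) ^ ((l:ℕ)) := by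
        rw [zpow_neg, ← Nat.cast_mul, zpow_natCast, pow_mul, inv_pow]
      rw [hz, mul_pow, pow_mul]
      ring
    rw [Finset.sum_congr rfl fun l _ => hterm l, Finset.sum_comm]
    have horth : ∀ j' : Fin n,
        (∑ l : Fin n, (ω ^ ((j':ℕ)) * (ω ^ ((j:ℕ)))⁻¹) ^ ((l:ℕ))) = if j' = j then (n:ℂ) else 0 := by
      intro j'
      set z : ℂ := ω ^ ((j':ℕ)) * (ω ^ ((j:ℕ)))⁻¹ with hzdef
      rw [Fin.sum_univ_eq_sum_range (fun i => z ^ i) n]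
      by_cases hjj : j' = j
      · subst hjj
        rw [if_pos rfl]
        have hz1 : z = 1 := mul_inv_cancel₀ (pow_ne_zero _ hωne)
        simp [hz1]
      · rw [if_neg hjj]
        have hzn : z ^ n = 1 := by
          rw [hzdef, mul_pow, inv_pow, ← pow_mul, ← pow_mul, mul_comm ((j':ℕ)) n,
            mul_comm ((j:ℕ)) n, pow_mul, pow_mul, hωn, one_pow, one_pow, inv_one, mul_one]
        have hz1 : z ≠ 1 := by
          intro hz1
          apply hjj
          apply Fin.ext
          refine hprim.pow_inj j'.isLt j.isLt ?_
          have h5 : ω ^ ((j':ℕ)) * (ω ^ ((j:ℕ)))⁻¹ = 1 := hzdef ▸ hz1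
          field_simp at h5
          exact h5
        rw [geom_sum_eq hz1, hzn, sub_self, zero_div]
    rw [Finset.sum_congr rfl fun j' _ => by rw [← Finset.sum_mul, horth j']]
    simp only [ite_mul, zero_mul]
    rw [Finset.sum_ite_eq' Finset.univ j (fun j' => (n:ℂ) * f j' x)]
    simp only [Finset.mem_univ, if_true]
    field_simp
  -- divisibility facts
  have hdn : d ∣ n := hd ▸ Nat.gcd_dvd_left n m
  have hdm : d ∣ m := hd ▸ Nat.gcd_dvd_right n m
  have hd0 : 0 < d := by
    rw [hd]; exact Nat.gcd_pos_of_pos_left m (by omega)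
  have hnd1 : 1 ≤ n / d := Nat.one_le_div_iff hd0 |>.mpr (Nat.le_of_dvd (by omega) hdn)
  have hnm : (n / d) * m = n * (m / d) := by
    obtain ⟨a, ha⟩ := hdn
    obtain ⟨b, hb⟩ := hdm
    subst ha hb
    rw [Nat.mul_div_cancel_left a hd0, Nat.mul_div_cancel_left b hd0]
    ring
  -- per-residue construction
  have hchoice : ∀ r : Fin d, ∃ hr : ℂ → ℂ,
      (∀ x y : ℂ, hr (x + y) = hr x * hr y) ∧
      (∀ (k : ℕ) (x : ℂ), G (((r:ℕ) + k * m) % n) x = hr (ω ^ (k * m) * x)) := by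
    intro r
    set c : ℕ → ℕ := fun k => (r:ℕ) + k * m with hc
    have hcper : ∀ k, G (c (k + n / d)) = G (c k) := by
      intro k
      rw [hGper (c (k + n/d)), hGper (c k)]
      have hcc : c (k + n/d) % n = c k % n := by
        show ((r:ℕ) + (k + n/d) * m) % n = ((r:ℕ) + k * m) % n
        rw [add_mul, hnm, ← add_assoc]
        exact Nat.add_mul_mod_self_left _ n _
      rw [hcc]
    have hcperS : ∀ s k, G (c (k + s * (n / d))) = G (c k) := by
      intro s
      induction s with
      | zero => intro k; simp
      | succ t ih =>
        intro k
        have : k + (t + 1) * (n / d) = (k + t * (n/d)) + n / d := by ring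
        rw [this, hcper, ih]
    have hA : ∀ (k : ℕ) (x : ℂ), G (c k) x = G (c (k+1)) 0 * G (c k) x := by
      intro k x
      have := keyR (c k) x 0
      rw [mul_zero, add_zero] at this
      rw [show c k + m = c (k+1) by simp [hc]; ring] at this
      exact this
    have hB : ∀ (k : ℕ) (y : ℂ), G (c k) (ω ^ m * y) = G (c (k+1)) y * G (c k) 0 := by
      intro k y
      have := keyR (c k) 0 y
      rw [zero_add] at this
      rw [show c k + m = c (k+1) by simp [hc]; ring] at this
      exact this
    by_cases hz : ∀ (k : ℕ) (x : ℂ), G (c k) x = 0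
    · refine ⟨fun _ => 0, fun x y => by ring, fun k x => ?_⟩
      rw [← hGper]
      exact hz k x
    · push_neg at hz
      obtain ⟨k₀, x₀, hx₀⟩ := hz
      have hstep : ∀ k : ℕ, (∃ x, G (c k) x ≠ 0) → G (c (k+1)) 0 = 1 := by
        rintro k ⟨x, hx⟩
        have h1 : G (c (k+1)) 0 * G (c k) x = 1 * G (c k) x := by
          rw [← hA k x, one_mul]
        exact mul_right_cancel₀ hx h1
      have hfwd : ∀ t : ℕ, G (c (k₀ + 1 + t)) 0 = 1 := by
        intro t
        induction t with
        | zero => exact hstep k₀ ⟨x₀, hx₀⟩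
        | succ u ih =>
          have : k₀ + 1 + (u + 1) = (k₀ + 1 + u) + 1 := by ring
          rw [this]
          exact hstep _ ⟨0, by rw [ih]; exact one_ne_zero⟩
      have hone : ∀ k : ℕ, G (c k) 0 = 1 := by
        intro k
        have hk : k + (k₀ + 1) * (n / d) = k₀ + 1 + (k + (k₀+1) * (n/d) - (k₀+1)) := by
          have : k₀ + 1 ≤ k + (k₀ + 1) * (n / d) :=
            le_trans (Nat.le_mul_of_pos_right _ (by omega)) (Nat.le_add_left _ _)
          omega
        rw [← hcperS (k₀+1) k, hk]
        exact hfwd _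
      have hshift : ∀ (k : ℕ) (y : ℂ), G (c (k+1)) y = G (c k) (ω ^ m * y) := by
        intro k y
        rw [hB k y, hone, mul_one]
      have hiter : ∀ (k : ℕ) (y : ℂ), G (c k) y = G (c 0) (ω ^ (k * m) * y) := by
        intro k
        induction k with
        | zero => intro y; simp
        | succ u ih =>
          intro y
          rw [hshift u y, ih (ω ^ m * y)]
          congr 1
          rw [← mul_assoc, ← pow_add]
          congr 2
          ring
      have hexp : ∀ x y : ℂ, G (c 0) (x + y) = G (c 0) x * G (c 0) y := by
        intro x y
        have h1 := keyR (c 0) x (y / ω ^ m)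
        rw [mul_div_cancel₀ y (pow_ne_zero m hωne)] at h1
        rw [show c 0 + m = c 1 by simp [hc]] at h1
        rw [hshift 0 (y / ω ^ m), mul_div_cancel₀ y (pow_ne_zero m hωne)] at h1
        rw [h1]; ring
      refine ⟨G (c 0), hexp, fun k x => ?_⟩
      rw [← hGper]
      exact hiter k x
  choose h hmul hval using hchoice
  refine ⟨h, hmul, fun j x => G (j:ℕ) x, fun r k _ x => hval r k x, fun j x => hinv j x⟩
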